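/- For the multirate backward Euler upwind scheme for u_t + u_x = 0, where u_i^{n+1} = u_i^{n+1/2} - (Δt/(2Δx)) u_i^{n+1} + (Δt/(2Δx)) u_{i-1}^{n+1} (both fluxes evaluated at time t_{n+1}), the local truncation error obtained by inserting a smooth exact solution is O(Δt) + O(Δx); in particular no term proportional to Δt/Δx appears, so the scheme remains consistent when Δt/Δx is held constant. -/

import Mathlib

open Filter Topology

/-- Consistency of the multirate backward Euler upwind scheme for `u_t + u_x = 0`:
both fluxes evaluated at `t_{n+1}`, at fixed Courant number `λ = Δt/Δx` the local
truncation error tends to `0` as `Δx → 0⁺` (it is `O(Δt) + O(Δx)`, with no term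
proportional to `Δt/Δx`). -/
theorem multirate_backward_euler_consistent
    (u : ℝ → ℝ → ℝ) (hu : ContDiff ℝ 3 (Function.uncurry u))
    (hpde : ∀ x t, deriv (fun s => u x s) t + deriv (fun y => u y t) x = 0)
    (xi tn lam : ℝ) (hlam : 0 < lam) :
    Tendsto
      (fun Δx : ℝ =>
        let Δt := lam * Δx
        (u xi (tn + Δt) - u xi (tn + Δt / 2)
          + (Δt / (2 * Δx)) * (u xi (tn + Δt) - u (xi - Δx) (tn + Δt))) / (Δt / 2))
      (𝓝[>] 0) (𝓝 0) := by
  have hdF : DifferentiableAt ℝ (Function.uncurry u) (xi, tn) :=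
    (hu.differentiable (by norm_num)).differentiableAt
  set L := fderiv ℝ (Function.uncurry u) (xi, tn) with hLdef
  have hF : HasFDerivAt (Function.uncurry u) L (xi, tn) := hdF.hasFDerivAt
  -- partial derivatives
  have hUt : HasDerivAt (fun s => u xi s) (L (0, 1)) tn := by
    have := hF.comp_hasDerivAt tn ((hasDerivAt_const tn xi).prodMk (hasDerivAt_id tn))
    exact this
  have hUx : HasDerivAt (fun y => u y tn) (L (1, 0)) xi := by
    have := hF.comp_hasDerivAt xi ((hasDerivAt_id xi).prodMk (hasDerivAt_const xi tn))
    exact this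
  have hsum : L (0, 1) + L (1, 0) = 0 := by
    have := hpde xi tn
    rwa [hUt.deriv, hUx.deriv] at this
  -- the numerator as a function of Δx
  set g : ℝ → ℝ := fun d =>
    u xi (tn + lam * d) - u xi (tn + lam * d / 2)
      + lam / 2 * (u xi (tn + lam * d) - u (xi - d) (tn + lam * d)) with hgdef
  have hF0 : HasFDerivAt (Function.uncurry u) L (xi, tn + lam * 0) := by simpa using hF
  have c1 : HasDerivAt (fun d : ℝ => ((xi : ℝ), tn + lam * d)) (0, lam) 0 := by
    refine HasDerivAt.prodMk (hasDerivAt_const _ _) ?_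
    simpa using ((hasDerivAt_id (0:ℝ)).const_mul lam).const_add tn
  have c2 : HasDerivAt (fun d : ℝ => ((xi : ℝ), tn + lam * d / 2)) (0, lam / 2) 0 := by
    refine HasDerivAt.prodMk (hasDerivAt_const _ _) ?_
    have : HasDerivAt (fun d : ℝ => tn + lam * d / 2) (lam * 1 / 2) 0 := by
      exact (((hasDerivAt_id (0:ℝ)).const_mul lam).div_const 2).const_add tn
    simpa using this
  have c3 : HasDerivAt (fun d : ℝ => (xi - d, tn + lam * d)) (-1, lam) 0 := by
    refine HasDerivAt.prodMk ?_ ?_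
    · simpa using (hasDerivAt_id (0:ℝ)).const_sub xi
    · simpa using ((hasDerivAt_id (0:ℝ)).const_mul lam).const_add tn
  have h1 : HasDerivAt (fun d : ℝ => u xi (tn + lam * d)) (L (0, lam)) 0 := by
    have hF1 : HasFDerivAt (Function.uncurry u) L (xi, tn + lam * 0) := by simpa using hF
    exact hF1.comp_hasDerivAt 0 c1
  have h2 : HasDerivAt (fun d : ℝ => u xi (tn + lam * d / 2)) (L (0, lam / 2)) 0 := by
    have hF2 : HasFDerivAt (Function.uncurry u) L (xi, tn + lam * 0 / 2) := by simpa using hF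
    exact hF2.comp_hasDerivAt 0 c2
  have h3 : HasDerivAt (fun d : ℝ => u (xi - d) (tn + lam * d)) (L (-1, lam)) 0 := by
    have hF3 : HasFDerivAt (Function.uncurry u) L (xi - 0, tn + lam * 0) := by simpa using hF
    exact hF3.comp_hasDerivAt 0 c3
  have hg : HasDerivAt g
      (L (0, lam) - L (0, lam / 2) + lam / 2 * (L (0, lam) - L (-1, lam))) 0 :=
    (h1.sub h2).add (((h1.sub h3)).const_mul (lam / 2))
  -- the derivative of g at 0 vanishes thanks to the PDE
  have hgL : L (0, lam) - L (0, lam / 2) + lam / 2 * (L (0, lam) - L (-1, lam)) = 0 := by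
    have e : ∀ a b : ℝ, L (a, b) = a * L (1, 0) + b * L (0, 1) := by
      intro a b
      have : (a, b) = a • ((1:ℝ), (0:ℝ)) + b • ((0:ℝ), (1:ℝ)) := by simp
      rw [this, L.map_add, L.map_smul, L.map_smul]
      simp [smul_eq_mul]
    rw [e 0 lam, e 0 (lam / 2), e (-1) lam]
    have h := hsum
    nlinarith [h]
  rw [hgL] at hg
  have hslope : Tendsto (fun d : ℝ => g d / d) (𝓝[>] 0) (𝓝 0) := by
    have := hasDerivAt_iff_tendsto_slope.mp hg
    have h' : Tendsto (slope g 0) (𝓝[>] 0) (𝓝 0) :=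
      this.mono_left (nhdsWithin_mono 0 (fun x hx => ne_of_gt hx))
    have hg0 : g 0 = 0 := by simp [hgdef]
    refine h'.congr' ?_
    filter_upwards [self_mem_nhdsWithin] with d hd
    simp [slope_def_field, hg0]
  have hmain : Tendsto (fun d : ℝ => (2 / lam) * (g d / d)) (𝓝[>] 0) (𝓝 0) := by
    simpa using hslope.const_mul (2 / lam)
  refine hmain.congr' ?_
  filter_upwards [self_mem_nhdsWithin] with d hd
  have hd0 : d ≠ 0 := ne_of_gt hd
  have hl0 : lam ≠ 0 := ne_of_gt hlam
  simp only [hgdef]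
  field_simp
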